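/- Let k > 2 be an integer, ζ a primitive k-th root of unity, and H = [ζ^{a_{ij}}] an n×n normalized Butson-Hadamard matrix BH(n,k). Let l be the smallest divisor of k with l ≥ 2. Then the minimum Hamming distance d between distinct rows of the exponent matrix [a_{ij}] (entries in ℤ_k) satisfies d ≥ n − n/l. -/

import Mathlib

open Finset Polynomial


private lemma sum_nthRoots (d : ℕ) (hd : 0 < d) :
    ∑ x ∈ nthRootsFinset d (1 : ℂ), x = if d = 1 then 1 else 0 := by
  have hζ := Complex.isPrimitiveRoot_exp d hd.ne'
  set ζ := Complex.exp (2 * Real.pi * Complex.I / d) with hζdef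
  have hord : d = orderOf ζ := hζ.eq_orderOf
  have hinj : Set.InjOn (fun i => ζ ^ i) (range d) := by
    intro a ha b hb hab
    exact pow_injOn_Iio_orderOf (by simpa [← hord] using ha) (by simpa [← hord] using hb) hab
  have himg : Finset.image (fun i => ζ ^ i) (range d) = nthRootsFinset d (1 : ℂ) := by
    apply Finset.eq_of_subset_of_card_le
    · intro x hx
      simp only [mem_image, mem_range] at hx
      obtain ⟨i, _, rfl⟩ := hx
      rw [mem_nthRootsFinset hd, ← pow_mul, mul_comm, pow_mul, hζ.pow_eq_one, one_pow]
    · rw [hζ.card_nthRootsFinset, Finset.card_image_of_injOn hinj, card_range]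
  rw [← himg, Finset.sum_image (fun a ha b hb h => hinj ha hb h)]
  rcases eq_or_lt_of_le (show 1 ≤ d from hd) with h1 | h1
  · simp [← h1]
  · rw [if_neg (by omega), hζ.geom_sum_eq_zero h1]

private lemma sum_primitiveRoots_eq_moebius (m : ℕ) (hm : 0 < m) :
    ∑ x ∈ primitiveRoots m ℂ, x = ((ArithmeticFunction.moebius m : ℤ) : ℂ) := by
  have key : ∀ d > 0, ∑ e ∈ Nat.divisors d, (∑ x ∈ primitiveRoots e ℂ, x)
      = (if d = 1 then 1 else 0 : ℂ) := by
    intro d hd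
    have hζ := Complex.isPrimitiveRoot_exp d hd.ne'
    rw [← sum_nthRoots d hd, IsPrimitiveRoot.nthRoots_one_eq_biUnion_primitiveRoots,
      Finset.sum_biUnion]
    intro a ha b hb hab
    exact IsPrimitiveRoot.disjoint hab
  have := (ArithmeticFunction.sum_eq_iff_sum_smul_moebius_eq
    (f := fun e => ∑ x ∈ primitiveRoots e ℂ, x)
    (g := fun d => if d = 1 then 1 else 0)).mp key m hm
  rw [← this]
  rw [Finset.sum_eq_single (m, 1)]
  · simp
  · rintro ⟨a, b⟩ hab hne
    rw [Nat.mem_divisorsAntidiagonal] at hab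
    have : b ≠ 1 := by rintro rfl; exact hne (by simp [← hab.1])
    simp [this]
  · intro h
    exact absurd (Nat.mem_divisorsAntidiagonal.mpr ⟨by simp, hm.ne'⟩) h
private lemma ramanujan_eval {k : ℕ} [NeZero k] {ζ : ℂ} (hζ : IsPrimitiveRoot ζ k)
    {v : ℕ} (hv : ¬ k ∣ v) :
    ∃ c m : ℕ, 1 < m ∧ m ∣ k ∧ c * m.totient = k.totient ∧
      ∑ u : (ZMod k)ˣ, ζ ^ ((u : ZMod k).val * v)
        = (c : ℂ) * ((ArithmeticFunction.moebius m : ℤ) : ℂ) := by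
  have hk : 0 < k := Nat.pos_of_ne_zero (NeZero.ne k)
  set η := ζ ^ v with hηdef
  have hηk : η ^ k = 1 := by
    rw [hηdef, ← pow_mul, mul_comm, pow_mul, hζ.pow_eq_one, one_pow]
  set m := orderOf η with hmdef
  have hmdvd : m ∣ k := orderOf_dvd_of_pow_eq_one hηk
  have hm0 : 0 < m :=
    IsOfFinOrder.orderOf_pos (isOfFinOrder_iff_pow_eq_one.mpr ⟨k, hk, hηk⟩)
  have hm1 : 1 < m := by
    rcases Nat.lt_or_ge 1 m with h | h
    · exact h
    · exfalso
      have hm : m = 1 := by omega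
      exact hv (hζ.dvd_of_pow_eq_one v (orderOf_eq_one_iff.mp hm))
  haveI : NeZero m := ⟨by omega⟩
  have hη : IsPrimitiveRoot η m := IsPrimitiveRoot.orderOf η
  set f := ZMod.unitsMap hmdvd with hfdef
  have hfe : ∀ u : (ZMod k)ˣ, ζ ^ ((u : ZMod k).val * v) = η ^ ((f u : ZMod m)).val := by
    intro u
    have h1 : ζ ^ ((u : ZMod k).val * v) = η ^ (u : ZMod k).val := by
      rw [hηdef, ← pow_mul, mul_comm]
    have h3 : ((u : ZMod k).val : ZMod k) = (u : ZMod k) := by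
      rw [ZMod.natCast_val, ZMod.cast_id]
    have h2 : ((f u : ZMod m)).val = (u : ZMod k).val % m := by
      rw [hfdef, ZMod.unitsMap_def]
      show ((ZMod.castHom hmdvd (ZMod m)) (u : ZMod k)).val = _
      conv_lhs => rw [← h3]
      rw [map_natCast, ZMod.val_natCast]
    rw [h1, h2]
    exact (pow_mod_orderOf η ((u : ZMod k).val)).symm
  set g : (ZMod m)ˣ → ℂ := fun w => η ^ ((w : ZMod m)).val with hgdef
  set c := #({u : (ZMod k)ˣ | f u = 1} : Finset _) with hcdef
  have hfib : ∀ j : (ZMod m)ˣ, #({u : (ZMod k)ˣ | f u = j} : Finset _) = c := fun j =>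
    MonoidHom.card_fiber_eq_of_mem_range f
      (ZMod.unitsMap_surjective hmdvd j) (ZMod.unitsMap_surjective hmdvd 1)
  have hSsplit : ∀ G : (ZMod m)ˣ → ℂ, ∑ u : (ZMod k)ˣ, G (f u) = c * ∑ j : (ZMod m)ˣ, G j := by
    intro G
    rw [← Fintype.sum_fiberwise (fun u => f u) (fun u => G (f u)), Finset.mul_sum]
    refine Finset.sum_congr rfl fun j _ => ?_
    rw [Finset.sum_congr rfl (fun (i : {i : (ZMod k)ˣ // f i = j}) _ => by rw [i.2]),
      Finset.sum_const, Finset.card_univ, Fintype.card_subtype, hfib j]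
    simp [nsmul_eq_mul]
  have hcard : c * m.totient = k.totient := by
    have h := hSsplit (fun _ => (1 : ℂ))
    simp only [Finset.sum_const, Finset.card_univ, nsmul_eq_mul, mul_one] at h
    rw [ZMod.card_units_eq_totient, ZMod.card_units_eq_totient] at h
    exact_mod_cast h.symm
  refine ⟨c, m, hm1, hmdvd, hcard, ?_⟩
  calc ∑ u : (ZMod k)ˣ, ζ ^ ((u : ZMod k).val * v)
      = ∑ u : (ZMod k)ˣ, g (f u) := Finset.sum_congr rfl fun u _ => hfe u
    _ = c * ∑ j : (ZMod m)ˣ, g j := hSsplit g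
    _ = c * ∑ x ∈ primitiveRoots m ℂ, x := by
        congr 1
        refine Finset.sum_bij (fun w _ => η ^ ((w : ZMod m)).val) ?_ ?_ ?_ ?_
        · intro w _
          rw [mem_primitiveRoots hm0]
          exact (hη.pow_iff_coprime hm0 _).mpr (ZMod.val_coe_unit_coprime w)
        · intro a _ b _ hab
          have := pow_injOn_Iio_orderOf (x := η)
            (Set.mem_Iio.mpr (ZMod.val_lt _)) (Set.mem_Iio.mpr (ZMod.val_lt _)) hab
          exact Units.ext (ZMod.val_injective m this)
        · intro x hx
          rw [mem_primitiveRoots hm0] at hx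
          obtain ⟨i, hi, hix⟩ := hη.eq_pow_of_pow_eq_one hx.pow_eq_one
          have hcop : i.Coprime m := (hη.pow_iff_coprime hm0 i).mp (by rw [hix]; exact hx)
          refine ⟨ZMod.unitOfCoprime i hcop, Finset.mem_univ _, ?_⟩
          show η ^ ((ZMod.unitOfCoprime i hcop : ZMod m)).val = x
          rw [show ((ZMod.unitOfCoprime i hcop : ZMod m)).val = i % m from ZMod.val_natCast m i,
            Nat.mod_eq_of_lt hi, hix]
        · intro w _; rfl
    _ = c * ((ArithmeticFunction.moebius m : ℤ) : ℂ) := by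
        rw [sum_primitiveRoots_eq_moebius m hm0]
private lemma conj_vanish {k n : ℕ} (hk : 0 < k) {ζ ζ' : ℂ}
    (hζ : IsPrimitiveRoot ζ k) (hζ' : IsPrimitiveRoot ζ' k) (v : Fin n → ℕ)
    (hsum : ∑ l, ζ ^ (v l) = 0) : ∑ l, ζ' ^ (v l) = 0 := by
  set f : Polynomial ℚ := ∑ l, X ^ (v l) with hfdef
  have hf : ∀ z : ℂ, aeval z f = ∑ l, z ^ (v l) := by
    intro z
    rw [hfdef, map_sum]
    exact Finset.sum_congr rfl fun l _ => by rw [map_pow, aeval_X]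
  have hdvd : minpoly ℚ ζ ∣ f := minpoly.dvd ℚ ζ (by rw [hf]; exact hsum)
  rw [← Polynomial.cyclotomic_eq_minpoly_rat hζ hk] at hdvd
  obtain ⟨q, hq⟩ := hdvd
  have hroot : aeval ζ' (cyclotomic k ℚ) = 0 := by
    have h1 : (cyclotomic k ℂ).IsRoot ζ' := hζ'.isRoot_cyclotomic hk
    rw [Polynomial.aeval_def, ← Polynomial.eval_map, Polynomial.map_cyclotomic]
    exact h1
  rw [← hf ζ', hq, map_mul, hroot, zero_mul]

theorem stmt10 (n k : ℕ) (hk : 2 < k) (hn : 0 < n) (ζ : ℂ)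
    (hζ : IsPrimitiveRoot ζ k) (A : Matrix (Fin n) (Fin n) (ZMod k))
    (hBH : ∀ i j, (∑ l, ζ ^ (A i l).val * star (ζ ^ (A j l).val))
        = if i = j then (n : ℂ) else 0)
    (hnorm : ∀ i j : Fin n, A i ⟨0, hn⟩ = 0 ∧ A ⟨0, hn⟩ j = 0) :
    ∀ i j : Fin n, i ≠ j →
      (n : ℝ) - (n : ℝ) / (k.minFac : ℝ) ≤ (hammingDist (A i) (A j) : ℝ) := by
  intro i j hij
  haveI : NeZero k := ⟨by omega⟩
  have hk0 : 0 < k := by omega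
  set p := k.minFac with hpdef
  have hpp : p.Prime := Nat.minFac_prime (by omega)
  have hp2 : 2 ≤ p := hpp.two_le
  set c : Fin n → ZMod k := fun l => A i l - A j l with hc
  have hζ1 : ζ ^ k = 1 := hζ.pow_eq_one
  have hζne : ζ ≠ 0 := by
    intro h; rw [h, zero_pow hk0.ne'] at hζ1; exact zero_ne_one hζ1
  have hnormζ : ‖ζ‖ = 1 := by
    have h1 : ‖ζ‖ ^ k = 1 := by rw [← norm_pow, hζ1, norm_one]
    rcases (pow_eq_one_iff_cases).mp h1 with h | h | h
    · omega
    · exact h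
    · exfalso; nlinarith [norm_nonneg ζ, h.1]
  have hstar2 : ∀ b : ℕ, ζ ^ b * star (ζ ^ b) = 1 := by
    intro b
    rw [show (star (ζ ^ b) : ℂ) = (starRingEnd ℂ) (ζ ^ b) from rfl, Complex.mul_conj]
    rw [← Complex.sq_norm]
    norm_cast
    rw [norm_pow, hnormζ, one_pow, one_pow]
  have hvaladd : ∀ x y : ZMod k, ζ ^ (x + y).val = ζ ^ x.val * ζ ^ y.val := by
    intro x y
    rw [ZMod.val_add, ← pow_add]
    have h := pow_mod_orderOf ζ (x.val + y.val)
    rw [← hζ.eq_orderOf] at h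
    exact h
  have hsum0 : ∑ l, ζ ^ ((c l).val) = 0 := by
    have h := hBH i j; rw [if_neg hij] at h
    rw [← h]
    refine Finset.sum_congr rfl fun l _ => ?_
    have hb : (ζ : ℂ) ^ (A j l).val ≠ 0 := pow_ne_zero _ hζne
    symm
    apply mul_right_cancel₀ hb
    rw [mul_assoc, mul_comm (star _), hstar2 (A j l).val, mul_one, ← hvaladd]
    congr 2
    rw [hc]; ring
  set Sl : Fin n → ℂ := fun l => ∑ u : (ZMod k)ˣ, ζ ^ ((u : ZMod k).val * (c l).val) with hSl
  have htot : ∑ l, Sl l = 0 := by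
    rw [hSl, Finset.sum_comm]
    refine Finset.sum_eq_zero fun u _ => ?_
    have hconj : ∑ l, (ζ ^ ((u : ZMod k).val)) ^ ((c l).val) = 0 :=
      conj_vanish hk0 hζ ((hζ.pow_iff_coprime hk0 _).mpr (ZMod.val_coe_unit_coprime u))
        (fun l => (c l).val) hsum0
    rw [← hconj]
    exact Finset.sum_congr rfl fun l _ => by rw [pow_mul]
  set φk := k.totient with hφk
  have hφkpos : 0 < φk := Nat.totient_pos.mpr hk0
  have hS0 : ∀ l, c l = 0 → (Sl l).re = (φk : ℝ) := by
    intro l hl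
    rw [hSl]
    simp only [hl, ZMod.val_zero, mul_zero, pow_zero]
    rw [Finset.sum_const, Finset.card_univ, ZMod.card_units_eq_totient, nsmul_eq_mul, mul_one]
    simp [hφk]
  have hSneg : ∀ l, c l ≠ 0 → -((φk : ℝ) / ((p : ℝ) - 1)) ≤ (Sl l).re := by
    intro l hl
    have hvne : ¬ k ∣ (c l).val := by
      intro hdvd
      have hlt : (c l).val < k := ZMod.val_lt _
      have : (c l).val = 0 := Nat.eq_zero_of_dvd_of_lt hdvd hlt
      exact hl ((ZMod.val_eq_zero _).mp this)
    obtain ⟨c', m, hm1, hmdvd, hcm, heq⟩ := ramanujan_eval hζ hvne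
    -- p - 1 ≤ φ m
    have hq : m.minFac.Prime := Nat.minFac_prime (by omega)
    have hpq : p ≤ m.minFac :=
      Nat.minFac_le_of_dvd hq.two_le (dvd_trans (Nat.minFac_dvd m) hmdvd)
    have hqm : m.minFac - 1 ≤ m.totient := by
      have h1 : (m.minFac).totient ∣ m.totient := Nat.totient_dvd_of_dvd (Nat.minFac_dvd m)
      have h2 : (m.minFac).totient = m.minFac - 1 := Nat.totient_prime hq
      have h3 : 0 < m.totient := Nat.totient_pos.mpr (by omega)
      rw [← h2]; exact Nat.le_of_dvd h3 h1
    have hpm : p - 1 ≤ m.totient := by omega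
    -- c' * (p-1) ≤ φk
    have hcb : c' * (p - 1) ≤ φk := by
      calc c' * (p - 1) ≤ c' * m.totient := Nat.mul_le_mul_left _ hpm
        _ = φk := hcm
    have hμ : |ArithmeticFunction.moebius m| ≤ 1 := ArithmeticFunction.abs_moebius_le_one
    have hre : (Sl l).re = (c' : ℝ) * (ArithmeticFunction.moebius m : ℝ) := by
      have h5 : Sl l = (c' : ℂ) * ((ArithmeticFunction.moebius m : ℤ) : ℂ) := heq
      rw [h5]
      simp [Complex.mul_re]
    rw [hre]
    have h1 : -(c' : ℝ) ≤ (c' : ℝ) * (ArithmeticFunction.moebius m : ℝ) := by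
      have : (-1 : ℝ) ≤ (ArithmeticFunction.moebius m : ℝ) := by
        have := (abs_le.mp hμ).1; exact_mod_cast this
      nlinarith [Nat.cast_nonneg (α := ℝ) c']
    have h2 : (c' : ℝ) ≤ (φk : ℝ) / ((p : ℝ) - 1) := by
      rw [le_div_iff₀ (by norm_num; omega)]
      have : (c' : ℝ) * ((p : ℝ) - 1) = ((c' * (p - 1) : ℕ) : ℝ) := by
        push_cast [Nat.cast_sub (by omega : 1 ≤ p)]; ring
      rw [this]
      exact_mod_cast hcb
    linarith
  -- counting
  set s : Finset (Fin n) := {l | c l = 0} with hs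
  set m₀ := #s with hm₀
  have hsplit : ∑ l ∈ s, (Sl l).re + ∑ l ∈ sᶜ, (Sl l).re = 0 := by
    rw [Finset.sum_add_sum_compl]
    rw [← Complex.re_sum, htot, Complex.zero_re]
  have hs1 : ∑ l ∈ s, (Sl l).re = (m₀ : ℝ) * (φk : ℝ) := by
    rw [Finset.sum_congr rfl (fun l hl => hS0 l (by simpa [hs] using hl)),
      Finset.sum_const, nsmul_eq_mul, hm₀]
  have hs2 : -((#sᶜ : ℝ) * ((φk : ℝ) / ((p : ℝ) - 1))) ≤ ∑ l ∈ sᶜ, (Sl l).re := by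
    rw [← neg_mul]
    calc (-(#sᶜ : ℝ)) * ((φk : ℝ) / ((p : ℝ) - 1))
        = ∑ _l ∈ sᶜ, -((φk : ℝ) / ((p : ℝ) - 1)) := by
          rw [Finset.sum_const, nsmul_eq_mul]; ring
      _ ≤ ∑ l ∈ sᶜ, (Sl l).re := Finset.sum_le_sum fun l hl =>
          hSneg l (by simpa [hs] using (Finset.mem_compl.mp hl))
  have hcompl : (#sᶜ : ℕ) = n - m₀ := by
    rw [Finset.card_compl, Fintype.card_fin, hm₀]
  have hm₀n : m₀ ≤ n := by rw [hm₀]; simpa using Finset.card_le_card (Finset.subset_univ s)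
  -- m₀ * p ≤ n
  have hkey : (m₀ : ℝ) * (p : ℝ) ≤ (n : ℝ) := by
    have hineq : (m₀ : ℝ) * (φk : ℝ) ≤ ((n : ℝ) - (m₀ : ℝ)) * ((φk : ℝ) / ((p : ℝ) - 1)) := by
      have := hsplit
      have h2 := hs2
      rw [hcompl] at h2
      have hcast : ((n - m₀ : ℕ) : ℝ) = (n : ℝ) - (m₀ : ℝ) := by
        push_cast [Nat.cast_sub hm₀n]; ring
      rw [hcast] at h2
      linarith [hs1]
    have hppos : (0 : ℝ) < (p : ℝ) - 1 := by
      have : (2 : ℝ) ≤ (p : ℝ) := by exact_mod_cast hp2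
      linarith
    have hφpos : (0 : ℝ) < (φk : ℝ) := by exact_mod_cast hφkpos
    have h4 : (m₀ : ℝ) * (φk : ℝ) ≤ ((n : ℝ) - (m₀ : ℝ)) * (φk : ℝ) / ((p : ℝ) - 1) := by
      rw [mul_div_assoc]
      exact hineq
    rw [le_div_iff₀ hppos] at h4
    have h5 : (m₀ : ℝ) * ((p : ℝ) - 1) ≤ (n : ℝ) - (m₀ : ℝ) :=
      le_of_mul_le_mul_right (by linear_combination h4) hφpos
    nlinarith [h5]
  -- hammingDist = n - m₀
  have hham : (hammingDist (A i) (A j) : ℕ) = n - m₀ := by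
    rw [hammingDist, ← hcompl]
    congr 1
    ext l
    simp [hs, hc, sub_eq_zero]
  rw [hham]
  have hcast : ((n - m₀ : ℕ) : ℝ) = (n : ℝ) - (m₀ : ℝ) := by
    push_cast [Nat.cast_sub hm₀n]; ring
  rw [hcast]
  have hppos : (0 : ℝ) < (p : ℝ) := by exact_mod_cast (by omega : 0 < p)
  rw [sub_le_sub_iff_left]
  rw [le_div_iff₀ hppos]
  linarith [hkey]
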